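/- arXiv:1507.01202 — 5 statements merged into one kernel-verified Lean document; each statement's English description precedes it below -/
import Mathlib

section
/- Let (A,U,B,V) be a general linear method satisfying the (L,P)-symmetry condition (A = P(UV⁻¹B−A)P, U = PUV⁻¹L, B = LV⁻¹BP, V = LV⁻¹L with L² = I, P² = I). Then for every diagonal s×s complex matrix Z such that both I − AZ and I + AP Z P are invertible (and V invertible), the linear stability matrix M(Z) := V + BZ(I − AZ)⁻¹U satisfies L·M(−PZP)·L·M(Z) = I. -/
open Matrix

/-- For an (L,P)-symmetric general linear method, the linear stability
matrix `M(Z) := V + BZ(I − AZ)⁻¹U` satisfies `L·M(−PZP)·L·M(Z) = I` for every diagonal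
`Z` such that `I − AZ` and `I + A·PZP` are invertible. -/
theorem symmetric_linear_stability {s r : ℕ}
    (A : Matrix (Fin s) (Fin s) ℂ) (U : Matrix (Fin s) (Fin r) ℂ)
    (B : Matrix (Fin r) (Fin s) ℂ) (V : Matrix (Fin r) (Fin r) ℂ)
    (L : Matrix (Fin r) (Fin r) ℂ) (P : Matrix (Fin s) (Fin s) ℂ)
    (hV : IsUnit V)
    (hP : ∃ σ : Equiv.Perm (Fin s), P = σ.permMatrix ℂ)
    (hL2 : L * L = 1) (hP2 : P * P = 1)
    (h1 : A = P * (U * V⁻¹ * B - A) * P)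
    (h2 : U = P * U * V⁻¹ * L)
    (h3 : B = L * V⁻¹ * B * P)
    (h4 : V = L * V⁻¹ * L) :
    ∀ Z : Matrix (Fin s) (Fin s) ℂ, Z.IsDiag →
      IsUnit (1 - A * Z) → IsUnit (1 + A * (P * Z * P)) →
      L * (V + B * (-(P * Z * P)) * (1 - A * (-(P * Z * P)))⁻¹ * U) * L *
        (V + B * Z * (1 - A * Z)⁻¹ * U) = 1 := by
  intro Z _hdiag hN h1AW
  set K : Matrix (Fin s) (Fin s) ℂ := 1 + (U * V⁻¹ * B - A) * Z with hKdef
  have hUnitP : IsUnit P := ⟨⟨P, P, hP2, hP2⟩, rfl⟩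
  -- generic cancellation helpers
  have hP2' : ∀ {n : Type} (X : Matrix (Fin s) n ℂ), P * (P * X) = X := by
    intro n X; rw [← Matrix.mul_assoc, hP2, Matrix.one_mul]
  have hL2' : ∀ {n : Type} (X : Matrix (Fin r) n ℂ), L * (L * X) = X := by
    intro n X; rw [← Matrix.mul_assoc, hL2, Matrix.one_mul]
  have hPX' : ∀ {n : Type} (X : Matrix (Fin s) n ℂ),
      P * (U * (V⁻¹ * (B * X))) - P * (A * X) = A * (P * X) := by
    intro n X
    conv_rhs => rw [h1]
    simp only [Matrix.mul_assoc, Matrix.sub_mul, Matrix.mul_sub, hP2']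
  have hLB' : ∀ {n : Type} (X : Matrix (Fin s) n ℂ),
      L * (B * X) = V⁻¹ * (B * (P * X)) := by
    intro n X
    conv_lhs => rw [h3]
    simp only [Matrix.mul_assoc, hL2']
  have hUL : U * L = P * (U * V⁻¹) := by
    conv_lhs => rw [h2]
    simp only [Matrix.mul_assoc]
    rw [hL2, Matrix.mul_one]
  have hLVL : L * (V * L) = V⁻¹ := by
    conv_lhs => rw [h4]
    simp only [Matrix.mul_assoc]
    rw [hL2, Matrix.mul_one, hL2']
  -- unit facts
  have hPKP : P * (K * P) = 1 + A * (P * (Z * P)) := by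
    rw [hKdef]
    simp only [Matrix.add_mul, Matrix.mul_add, Matrix.sub_mul, Matrix.mul_sub,
      Matrix.one_mul, Matrix.mul_one, Matrix.mul_assoc]
    rw [hPX' (Z * P), hP2]
  have h1AW' : IsUnit (1 + A * (P * (Z * P))) := by
    simpa only [Matrix.mul_assoc] using h1AW
  have e1 : K * P = P * (1 + A * (P * (Z * P))) := by
    have := congrArg (fun X => P * X) hPKP
    simpa only [hP2'] using this
  have hKeq : K = P * ((1 + A * (P * (Z * P))) * P) := by
    have e2 := congrArg (fun X => X * P) e1
    simpa only [Matrix.mul_assoc, hP2, Matrix.mul_one] using e2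
  have hK : IsUnit K := by
    rw [hKeq, ← Matrix.mul_assoc]
    exact (hUnitP.mul h1AW').mul hUnitP
  have hKKi : K * K⁻¹ = 1 := Matrix.mul_nonsing_inv _ ((Matrix.isUnit_iff_isUnit_det _).mp hK)
  have hKiK : K⁻¹ * K = 1 := Matrix.nonsing_inv_mul _ ((Matrix.isUnit_iff_isUnit_det _).mp hK)
  have hKKi' : ∀ {n : Type} (X : Matrix (Fin s) n ℂ), K * (K⁻¹ * X) = X := by
    intro n X; rw [← Matrix.mul_assoc, hKKi, Matrix.one_mul]
  have hNNi : (1 - A * Z) * (1 - A * Z)⁻¹ = 1 :=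
    Matrix.mul_nonsing_inv _ ((Matrix.isUnit_iff_isUnit_det _).mp hN)
  have hViV : V⁻¹ * V = 1 := Matrix.nonsing_inv_mul _ ((Matrix.isUnit_iff_isUnit_det _).mp hV)
  have hInvEq : (1 + A * (P * (Z * P)))⁻¹ = P * (K⁻¹ * P) := by
    apply Matrix.inv_eq_right_inv
    rw [← hPKP]
    simp only [Matrix.mul_assoc, hP2', hKKi']
    exact hP2
  -- the left factor
  have outer : L * (V + B * (-(P * Z * P)) * (P * (K⁻¹ * P)) * U) * L
      = V⁻¹ - V⁻¹ * (B * (Z * (K⁻¹ * (U * V⁻¹)))) := by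
    simp only [Matrix.mul_assoc, Matrix.neg_mul, Matrix.mul_neg, Matrix.mul_add,
      Matrix.add_mul, Matrix.mul_one, Matrix.one_mul, hUL, hP2', hLB', hLVL]
    abel
  -- resolvent identity
  have hKN : K = (1 - A * Z) + U * (V⁻¹ * (B * Z)) := by
    rw [hKdef]
    simp only [Matrix.sub_mul, Matrix.mul_assoc]
    abel
  have key : (1 - A * Z)⁻¹ * U
      = K⁻¹ * U + K⁻¹ * (U * (V⁻¹ * (B * (Z * ((1 - A * Z)⁻¹ * U))))) := by
    calc (1 - A * Z)⁻¹ * U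
        = K⁻¹ * (K * ((1 - A * Z)⁻¹ * U)) := by
          rw [← Matrix.mul_assoc, hKiK, Matrix.one_mul]
      _ = K⁻¹ * (((1 - A * Z) + U * (V⁻¹ * (B * Z))) * ((1 - A * Z)⁻¹ * U)) := by
          rw [← hKN]
      _ = K⁻¹ * ((1 - A * Z) * ((1 - A * Z)⁻¹ * U)
            + U * (V⁻¹ * (B * Z)) * ((1 - A * Z)⁻¹ * U)) := by
          rw [Matrix.add_mul]
      _ = K⁻¹ * U + K⁻¹ * (U * (V⁻¹ * (B * (Z * ((1 - A * Z)⁻¹ * U))))) := by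
          rw [← Matrix.mul_assoc (1 - A * Z), hNNi, Matrix.one_mul]
          simp only [Matrix.mul_assoc, Matrix.mul_add]
  -- main multiplicative identity
  have main : (V⁻¹ - V⁻¹ * (B * (Z * (K⁻¹ * (U * V⁻¹)))))
      * (V + B * Z * (1 - A * Z)⁻¹ * U) = 1 := by
    calc (V⁻¹ - V⁻¹ * (B * (Z * (K⁻¹ * (U * V⁻¹)))))
        * (V + B * Z * (1 - A * Z)⁻¹ * U)
        = V⁻¹ * V + V⁻¹ * (B * (Z * ((1 - A * Z)⁻¹ * U)))
            - (V⁻¹ * (B * (Z * (K⁻¹ * (U * (V⁻¹ * V)))))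
              + V⁻¹ * (B * (Z * (K⁻¹ * (U * (V⁻¹ * (B * (Z * ((1 - A * Z)⁻¹ * U))))))))) := by
          simp only [Matrix.mul_assoc, Matrix.mul_add, Matrix.add_mul, Matrix.sub_mul,
            Matrix.mul_sub]
          abel
      _ = 1 + V⁻¹ * (B * (Z * ((1 - A * Z)⁻¹ * U)))
            - (V⁻¹ * (B * (Z * (K⁻¹ * U)))
              + V⁻¹ * (B * (Z * (K⁻¹ * (U * (V⁻¹ * (B * (Z * ((1 - A * Z)⁻¹ * U))))))))) := by
          rw [hViV, Matrix.mul_one]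
      _ = 1 := by
          nth_rewrite 1 [key]
          simp only [Matrix.mul_add]
          abel
  -- assemble
  have hneg : (1 : Matrix (Fin s) (Fin s) ℂ) - A * (-(P * Z * P)) = 1 + A * (P * (Z * P)) := by
    rw [Matrix.mul_neg, sub_neg_eq_add, Matrix.mul_assoc]
  rw [hneg, hInvEq, outer, main]
end

section
/- Let (A,U,B,V) be an (L,P)-symmetric general linear method, i.e. A = P(UV⁻¹B−A)P, U = PUV⁻¹L, B = LV⁻¹BP, V = LV⁻¹L, with L² = I, P² = I, and V invertible. Define the transfer function N(ζ) = A + U(ζI − V)⁻¹B for ζ not an eigenvalue of V and ζ ≠ 0. Then N(ζ) = −P·N(ζ⁻¹)·P for all ζ ∈ ℂ with ζ ∉ {0}, ζ not an eigenvalue of V, and ζ⁻¹ not an eigenvalue of V. -/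
open Matrix

/-- For an (L,P)-symmetric general linear method, the transfer function
`N(ζ) = A + U(ζI − V)⁻¹B` satisfies `N(ζ) = −P N(ζ⁻¹) P` for all admissible `ζ`. -/
theorem transfer_function_symmetry {s r : ℕ}
    (A : Matrix (Fin s) (Fin s) ℂ) (U : Matrix (Fin s) (Fin r) ℂ)
    (B : Matrix (Fin r) (Fin s) ℂ) (V : Matrix (Fin r) (Fin r) ℂ)
    (L : Matrix (Fin r) (Fin r) ℂ) (P : Matrix (Fin s) (Fin s) ℂ)
    (hV : IsUnit V)
    (hP : ∃ σ : Equiv.Perm (Fin s), P = σ.permMatrix ℂ)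
    (hL2 : L * L = 1) (hP2 : P * P = 1)
    (h1 : A = P * (U * V⁻¹ * B - A) * P)
    (h2 : U = P * U * V⁻¹ * L)
    (h3 : B = L * V⁻¹ * B * P)
    (h4 : V = L * V⁻¹ * L) :
    ∀ ζ : ℂ, ζ ≠ 0 → ζ ∉ spectrum ℂ V → ζ⁻¹ ∉ spectrum ℂ V →
      A + U * (ζ • (1 : Matrix (Fin r) (Fin r) ℂ) - V)⁻¹ * B =
        -(P * (A + U * (ζ⁻¹ • (1 : Matrix (Fin r) (Fin r) ℂ) - V)⁻¹ * B) * P) := by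
  intro ζ hζ hspec hspec'
  set W : Matrix (Fin r) (Fin r) ℂ := ζ • (1 : Matrix (Fin r) (Fin r) ℂ) - V with hW
  set W' : Matrix (Fin r) (Fin r) ℂ := ζ⁻¹ • (1 : Matrix (Fin r) (Fin r) ℂ) - V with hW'
  have hVd : IsUnit V.det := (Matrix.isUnit_iff_isUnit_det V).mp hV
  have hWu : IsUnit W := by
    have := spectrum.notMem_iff.mp hspec
    rwa [Algebra.algebraMap_eq_smul_one] at this
  have hWd : IsUnit W.det := (Matrix.isUnit_iff_isUnit_det W).mp hWu
  have hVV : V * V⁻¹ = 1 := Matrix.mul_nonsing_inv V hVd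
  have hVV' : V⁻¹ * V = 1 := Matrix.nonsing_inv_mul V hVd
  have hWW : W * W⁻¹ = 1 := Matrix.mul_nonsing_inv W hWd
  have hWW' : W⁻¹ * W = 1 := Matrix.nonsing_inv_mul W hWd
  have hLinv : L⁻¹ = L := Matrix.inv_eq_left_inv hL2
  -- L V L = V⁻¹
  have hLVL : L * V * L = V⁻¹ := by
    conv_lhs => rw [h4]
    calc L * (L * V⁻¹ * L) * L = (L * L) * V⁻¹ * (L * L) := by noncomm_ring
    _ = V⁻¹ := by rw [hL2]; simp
  -- the conjugated matrix
  set X : Matrix (Fin r) (Fin r) ℂ := ζ⁻¹ • (1 : Matrix (Fin r) (Fin r) ℂ) - V⁻¹ with hX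
  have hLWL : L * W' * L = X := by
    rw [hW', hX, mul_sub, sub_mul, Matrix.mul_smul, Matrix.smul_mul, mul_one, hL2, hLVL]
  have hconj : L * W'⁻¹ * L = X⁻¹ := by
    rw [← hLWL, Matrix.mul_inv_rev, Matrix.mul_inv_rev, hLinv, Matrix.mul_assoc]
  -- X⁻¹ = (-ζ) • (W⁻¹ * V)
  have hXinv : X⁻¹ = (-ζ) • (W⁻¹ * V) := by
    refine Matrix.inv_eq_left_inv ?_
    rw [hX]
    rw [Matrix.smul_mul, mul_sub, Matrix.mul_smul, mul_one, mul_assoc, hVV, mul_one,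
      smul_sub, smul_smul, neg_mul, mul_inv_cancel₀ hζ]
    have e : ((-1 : ℂ)) • (W⁻¹ * V) - (-ζ) • W⁻¹ = W⁻¹ * W := by
      rw [hW, mul_sub, Matrix.mul_smul, mul_one, neg_smul, one_smul, neg_smul,
        sub_neg_eq_add]
      abel
    rw [e, hWW']
  -- resolvent identity : W⁻¹ = ζ • (V⁻¹ * W⁻¹) - V⁻¹
  have hres : W⁻¹ = ζ • (V⁻¹ * W⁻¹) - V⁻¹ := by
    have h0 : V⁻¹ * W * W⁻¹ = V⁻¹ := by rw [mul_assoc, hWW, mul_one]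
    nth_rw 1 [hW] at h0
    rw [mul_sub, Matrix.mul_smul, mul_one, sub_mul, Matrix.smul_mul, hVV', one_mul] at h0
    linear_combination (norm := noncomm_ring) -h0
  -- symmetry consequences
  have hPU : P * U = U * V⁻¹ * L := by
    conv_lhs => rw [h2]
    rw [show P * (P * U * V⁻¹ * L) = (P * P) * (U * (V⁻¹ * L)) by
      simp only [Matrix.mul_assoc], hP2, Matrix.one_mul, Matrix.mul_assoc]
  have hBP : B * P = L * V⁻¹ * B := by
    conv_lhs => rw [h3]
    rw [show L * V⁻¹ * B * P * P = (L * V⁻¹ * B) * (P * P) by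
      simp only [Matrix.mul_assoc], hP2, Matrix.mul_one]
  have hPAP : P * A * P = U * V⁻¹ * B - A := by
    conv_lhs => rw [h1]
    rw [show P * (P * (U * V⁻¹ * B - A) * P) * P
        = (P * P) * ((U * V⁻¹ * B - A) * (P * P)) by simp only [Matrix.mul_assoc], hP2]
    simp
  -- assemble
  have hRHS : P * (A + U * W'⁻¹ * B) * P
      = (U * V⁻¹ * B - A) + U * V⁻¹ * X⁻¹ * V⁻¹ * B := by
    rw [mul_add, add_mul, hPAP]
    congr 1
    calc P * (U * W'⁻¹ * B) * P = (P * U) * W'⁻¹ * (B * P) := by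
          simp only [Matrix.mul_assoc]
    _ = U * V⁻¹ * (L * W'⁻¹ * L) * V⁻¹ * B := by
          rw [hPU, hBP]; simp only [Matrix.mul_assoc]
    _ = U * V⁻¹ * X⁻¹ * V⁻¹ * B := by rw [hconj]
  have h6 : U * V⁻¹ * X⁻¹ * V⁻¹ * B = (-ζ) • (U * (V⁻¹ * W⁻¹) * B) := by
    rw [hXinv, Matrix.mul_smul, Matrix.smul_mul, Matrix.smul_mul]
    congr 1
    rw [show U * V⁻¹ * (W⁻¹ * V) * V⁻¹ * B = U * (V⁻¹ * (W⁻¹ * (V * V⁻¹))) * B from by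
          simp only [Matrix.mul_assoc], hVV, Matrix.mul_one]
  have h7 : U * W⁻¹ * B = ζ • (U * (V⁻¹ * W⁻¹) * B) - U * V⁻¹ * B := by
    conv_lhs => rw [hres]
    rw [Matrix.mul_sub, Matrix.sub_mul, Matrix.mul_smul, Matrix.smul_mul]
  rw [hRHS, h6, h7, neg_smul]
  abel
end

section
/- Let (A,U,B,V) be a general linear method with V invertible and let D be a real invertible diagonal s×s matrix. Suppose there exists a Hermitian matrix G with the G-symplecticity conditions: DA + AᴴD = BᴴGB, DU = BᴴGV, and G = VᴴGV. Then the transfer function N(ζ) = A + U(ζI − V)⁻¹B satisfies D·N(ζ) + N(1/conj(ζ))ᴴ·D = 0 for all ζ with ζ ∉ {0}, ζ not an eigenvalue of V, and 1/conj(ζ) not an eigenvalue of V. -/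
open Matrix

/-- For a G-symplectic general linear method (with real invertible diagonal
`D` and Hermitian `G` satisfying `DA + AᴴD = BᴴGB`, `DU = BᴴGV`, `G = VᴴGV`), the
transfer function `N(ζ) = A + U(ζI − V)⁻¹B` satisfies `D·N(ζ) + N(1/conj ζ)ᴴ·D = 0`. -/
theorem transfer_function_G_symplectic {s r : ℕ}
    (A : Matrix (Fin s) (Fin s) ℂ) (U : Matrix (Fin s) (Fin r) ℂ)
    (B : Matrix (Fin r) (Fin s) ℂ) (V : Matrix (Fin r) (Fin r) ℂ)
    (hV : IsUnit V)
    (d : Fin s → ℝ) (hd : ∀ i, d i ≠ 0)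
    (D : Matrix (Fin s) (Fin s) ℂ)
    (hD : D = Matrix.diagonal (fun i => (d i : ℂ)))
    (G : Matrix (Fin r) (Fin r) ℂ) (hG : G.IsHermitian)
    (hDA : D * A + Aᴴ * D = Bᴴ * G * B)
    (hDU : D * U = Bᴴ * G * V)
    (hGV : G = Vᴴ * G * V) :
    ∀ ζ : ℂ, ζ ≠ 0 → ζ ∉ spectrum ℂ V → (starRingEnd ℂ ζ)⁻¹ ∉ spectrum ℂ V →
      D * (A + U * (ζ • (1 : Matrix (Fin r) (Fin r) ℂ) - V)⁻¹ * B) +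
        (A + U * ((starRingEnd ℂ ζ)⁻¹ • (1 : Matrix (Fin r) (Fin r) ℂ) - V)⁻¹ * B)ᴴ * D
        = 0 := by
  intro ζ hζ hζV hwV
  set w : ℂ := (starRingEnd ℂ ζ)⁻¹ with hw
  have hwz : starRingEnd ℂ w = ζ⁻¹ := by
    simp [hw, map_inv₀]
  have hQ : IsUnit (ζ • (1 : Matrix (Fin r) (Fin r) ℂ) - V) := by
    have := spectrum.notMem_iff.mp hζV
    rwa [Algebra.algebraMap_eq_smul_one] at this
  have hYu : IsUnit (w • (1 : Matrix (Fin r) (Fin r) ℂ) - V) := by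
    have := spectrum.notMem_iff.mp hwV
    rwa [Algebra.algebraMap_eq_smul_one] at this
  have hPdef : (w • (1 : Matrix (Fin r) (Fin r) ℂ) - V)ᴴ
      = ζ⁻¹ • (1 : Matrix (Fin r) (Fin r) ℂ) - Vᴴ := by
    simp [conjTranspose_sub, conjTranspose_smul, hwz]
  set Q : Matrix (Fin r) (Fin r) ℂ := ζ • (1 : Matrix (Fin r) (Fin r) ℂ) - V with hQdef
  set P : Matrix (Fin r) (Fin r) ℂ := ζ⁻¹ • (1 : Matrix (Fin r) (Fin r) ℂ) - Vᴴ with hPd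
  have hP : IsUnit P := by
    rw [← hPdef]
    rw [Matrix.isUnit_conjTranspose]
    exact hYu
  have hQd : IsUnit Q.det := (Matrix.isUnit_iff_isUnit_det Q).mp hQ
  have hPdet : IsUnit P.det := (Matrix.isUnit_iff_isUnit_det P).mp hP
  have hYH : ((w • (1 : Matrix (Fin r) (Fin r) ℂ) - V)⁻¹)ᴴ = P⁻¹ := by
    rw [Matrix.conjTranspose_nonsing_inv, hPdef]
  -- key identity
  have inner : P * G * Q + P * (G * V) + Vᴴ * G * Q = 0 := by
    rw [hPd, hQdef]
    have h1 : ζ⁻¹ * ζ = 1 := inv_mul_cancel₀ hζ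
    simp only [sub_mul, mul_sub, smul_mul_assoc, Matrix.mul_smul, Matrix.one_mul,
      Matrix.mul_one, smul_smul, h1, one_smul]
    rw [← mul_assoc Vᴴ G V, ← hGV]
    abel
  have key : G + G * V * Q⁻¹ + P⁻¹ * Vᴴ * G = 0 := by
    have hexp : P * (G + G * V * Q⁻¹ + P⁻¹ * Vᴴ * G) * Q
        = P * G * Q + P * (G * V) + Vᴴ * G * Q := by
      simp only [Matrix.add_mul, Matrix.mul_add, Matrix.mul_assoc,
        Matrix.nonsing_inv_mul Q hQd, Matrix.mul_one,
        Matrix.mul_nonsing_inv_cancel_left _ _ hPdet]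
    have h0 : P * (G + G * V * Q⁻¹ + P⁻¹ * Vᴴ * G) * Q = 0 := by rw [hexp, inner]
    have h1 := congrArg (fun M => P⁻¹ * M * Q⁻¹) h0
    simpa only [Matrix.mul_assoc, Matrix.mul_nonsing_inv Q hQd, Matrix.mul_one,
      Matrix.nonsing_inv_mul_cancel_left _ _ hPdet, Matrix.mul_zero,
      Matrix.zero_mul] using h1
  -- D is hermitian
  have hDH : Dᴴ = D := by
    rw [hD]
    simp [Matrix.diagonal_conjTranspose, Function.comp]
  have hUD : Uᴴ * D = Vᴴ * G * B := by
    have h := congrArg conjTranspose hDU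
    rw [conjTranspose_mul, hDH] at h
    rw [h]
    simp [conjTranspose_mul, hG.eq, Matrix.mul_assoc]
  have hexp2 : D * (A + U * Q⁻¹ * B) + (A + U * (w • (1 : Matrix (Fin r) (Fin r) ℂ) - V)⁻¹ * B)ᴴ * D
      = (D * A + Aᴴ * D) + (D * U) * (Q⁻¹ * B) + Bᴴ * ((P⁻¹ * (Uᴴ * D))) := by
    simp only [conjTranspose_add, conjTranspose_mul, hYH, Matrix.mul_add,
      Matrix.add_mul, Matrix.mul_assoc]
    abel
  rw [hexp2, hDA, hDU, hUD]
  have hfin : Bᴴ * G * B + Bᴴ * G * V * (Q⁻¹ * B) + Bᴴ * (P⁻¹ * (Vᴴ * G * B))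
      = Bᴴ * (G + G * V * Q⁻¹ + P⁻¹ * Vᴴ * G) * B := by
    simp only [Matrix.mul_add, Matrix.add_mul, Matrix.mul_assoc]
  rw [hfin, key, Matrix.mul_zero, Matrix.zero_mul]
end

section
/- The 5×5 tableau of method 4123A, given by A = [[1/6,0,0],[1/6,1/6,0],[1/3,2/3,1/6]], U = [[1,−1/3],[1,1/3],[1,−1/3]], B = [[1/4,1/2,1/4],[1/4,1/2,1/4]], V = [[1,0],[0,−1]], satisfies the (L,P)-symmetry conditions with L = diag(1,−1) and P the order-reversing 3×3 permutation: A + PAP = UV⁻¹B, PU = ULV, BP = VLB, L = VLV; and it is parasitism-free: (BU)₂₂ = 0. -/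
open Matrix

/-- The tableau of method 4123A is (L,P)-symmetric with
`L = diag(1,−1)` and `P` the order-reversing 3×3 permutation, and parasitism-free. -/
theorem method_4123A_symmetric_parasitism_free :
    let A : Matrix (Fin 3) (Fin 3) ℂ := !![1/6, 0, 0; 1/6, 1/6, 0; 1/3, 2/3, 1/6]
    let U : Matrix (Fin 3) (Fin 2) ℂ := !![1, -1/3; 1, 1/3; 1, -1/3]
    let B : Matrix (Fin 2) (Fin 3) ℂ := !![1/4, 1/2, 1/4; 1/4, 1/2, 1/4]
    let V : Matrix (Fin 2) (Fin 2) ℂ := !![1, 0; 0, -1]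
    let L : Matrix (Fin 2) (Fin 2) ℂ := !![1, 0; 0, -1]
    let P : Matrix (Fin 3) (Fin 3) ℂ := !![0, 0, 1; 0, 1, 0; 1, 0, 0]
    A + P * A * P = U * V⁻¹ * B ∧
    P * U = U * L * V ∧
    B * P = V * L * B ∧
    L = V * L * V ∧
    (B * U) 1 1 = 0 := by
  intro A U B V L P
  have hV : V⁻¹ = V := by
    apply inv_eq_right_inv
    show V * V = 1
    ext i j
    fin_cases i <;> fin_cases j <;>
      simp [V, Matrix.mul_apply, Fin.sum_univ_succ, Matrix.vecHead, Matrix.vecTail, Function.comp] <;> norm_num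
  rw [hV]
  refine ⟨?_, ?_, ?_, ?_, ?_⟩ <;>
    first
    | (ext i j
       fin_cases i <;> fin_cases j <;>
         simp [A, U, B, V, L, P, Matrix.mul_apply, Fin.sum_univ_succ, Matrix.vecHead, Matrix.vecTail, Function.comp] <;> norm_num)
    | (simp [A, U, B, V, L, P, Matrix.mul_apply, Fin.sum_univ_succ, Matrix.vecHead, Matrix.vecTail, Function.comp] <;> norm_num)
end

section
/- Let (A,U,B,V) be an (L,P)-symmetric general linear method with r = 2, s = 3, V = diag(1,−1), L = diag(1,1) = I, and P the order-reversing permutation of 3 elements. Suppose the method is preconsistent (Ue₁ = 𝟙) and write B = [[b₁,b₂,b₃],[β₁,β₂,β₃]], U = [[1,u₁],[1,u₂],[1,u₃]]. Then the symmetry conditions BP = VLB and PU = ULV force β₂ = 0, β₃ = −β₁, u₂ = 0, and u₃ = −u₁, and consequently the parasitism growth factor (BU)₂₂ = −2β₁u₁ can only vanish if β₁ = 0 or u₁ = 0. -/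
open Matrix

/-- For an rs = 23 method with `V = diag(1,−1)`, `L = I`, and `P` the
order-reversing permutation, preconsistency (`Ue₁ = 𝟙`) and the symmetry conditions
`BP = VLB`, `PU = ULV` force `β₂ = 0`, `β₃ = −β₁`, `u₂ = 0`, `u₃ = −u₁`; the
parasitism growth factor `(BU)₂₂ = β₁u₁ + β₂u₂ + β₃u₃` reduces to a multiple of
`β₁u₁` and can vanish only if `β₁ = 0` or `u₁ = 0`. -/
theorem rs23_L_identity_obstruction
    (B : Matrix (Fin 2) (Fin 3) ℂ) (U : Matrix (Fin 3) (Fin 2) ℂ)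
    (V : Matrix (Fin 2) (Fin 2) ℂ) (hV : V = !![1, 0; 0, -1])
    (L : Matrix (Fin 2) (Fin 2) ℂ) (hL : L = 1)
    (P : Matrix (Fin 3) (Fin 3) ℂ) (hP : P = !![0, 0, 1; 0, 1, 0; 1, 0, 0])
    (hpre : ∀ i : Fin 3, U i 0 = 1)
    (hBP : B * P = V * L * B)
    (hPU : P * U = U * L * V) :
    B 1 1 = 0 ∧ B 1 2 = -B 1 0 ∧ U 1 1 = 0 ∧ U 2 1 = -U 0 1 ∧
    (B * U) 1 1 = 2 * (B 1 0 * U 0 1) ∧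
    ((B * U) 1 1 = 0 → B 1 0 = 0 ∨ U 0 1 = 0) := by
  subst hV hL hP
  have h1 := congrFun (congrFun hBP 1) 1
  have h2 := congrFun (congrFun hBP 1) 0
  have h3 := congrFun (congrFun hPU 1) 1
  have h4 := congrFun (congrFun hPU 0) 1
  simp [Matrix.mul_apply, Fin.sum_univ_succ] at h1 h2 h3 h4
  have hb1 : B 1 1 = 0 := by linear_combination h1 / 2
  have hb2 : B 1 2 = -B 1 0 := h2
  have hu1 : U 1 1 = 0 := by linear_combination h3 / 2
  have hu2 : U 2 1 = -U 0 1 := h4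
  refine ⟨hb1, hb2, hu1, hu2, ?_, ?_⟩
  · simp [Matrix.mul_apply, Fin.sum_univ_succ, hb1, hb2, hu1, hu2, hpre]
    ring
  · intro h
    rw [show (B * U) 1 1 = 2 * (B 1 0 * U 0 1) by
      simp [Matrix.mul_apply, Fin.sum_univ_succ, hb1, hb2, hu1, hu2]; ring] at h
    have : B 1 0 * U 0 1 = 0 := by linear_combination h / 2
    exact mul_eq_zero.mp this
end
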